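/- Let G = (V,E) be a finite simple connected graph of order n ≥ 2. Then α₀(S(G)) = n = β₀(S(G)) holds if and only if |N(S)| ≥ |S| for every independent set S of G. -/

import Mathlib

/-- A finset `S` is independent in `G` if no two of its vertices are adjacent. -/
def IsIndepFinset {V : Type*} (G : SimpleGraph V) (S : Finset V) : Prop :=
  ∀ u ∈ S, ∀ v ∈ S, ¬ G.Adj u v

open Classical in
/-- The neighborhood `N(S)` of a finset `S` in `G`: all vertices adjacent to some vertex of `S`. -/
noncomputable def nbhdSet {V : Type*} [Fintype V] (G : SimpleGraph V) (S : Finset V) : Finset V :=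
  Finset.univ.filter fun v => ∃ u ∈ S, G.Adj u v

/-- The independence number `β₀(G)`: maximum size of an independent set. -/
noncomputable def indepNum {V : Type*} [Fintype V] (G : SimpleGraph V) : ℕ :=
  sSup {k : ℕ | ∃ S : Finset V, IsIndepFinset G S ∧ S.card = k}

/-- A finset `C` is a vertex cover of `G` if it meets every edge. -/
def IsVertexCover {V : Type*} (G : SimpleGraph V) (C : Finset V) : Prop :=
  ∀ u v, G.Adj u v → u ∈ C ∨ v ∈ C

/-- The vertex cover number `α₀(G)`: minimum size of a vertex cover. -/
noncomputable def coverNum {V : Type*} [Fintype V] (G : SimpleGraph V) : ℕ :=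
  sInf {k : ℕ | ∃ C : Finset V, IsVertexCover G C ∧ C.card = k}

/-- `β₀*(G) = max {|S| - |N(S)| : S independent in G}`. -/
noncomputable def betaStar {V : Type*} [Fintype V] (G : SimpleGraph V) : ℤ :=
  sSup {k : ℤ | ∃ S : Finset V,
    IsIndepFinset G S ∧ k = (S.card : ℤ) - ((nbhdSet G S).card : ℤ)}

/-- The splitting graph `S(G)`: vertex set `V ⊔ V'`, with the edges of `G` together with an
edge between the copy `v'` of `v` and `u` for every edge `vu` of `G`. -/
def splittingGraph {V : Type*} (G : SimpleGraph V) : SimpleGraph (V ⊕ V) where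
  Adj x y :=
    match x, y with
    | Sum.inl a, Sum.inl b => G.Adj a b
    | Sum.inl a, Sum.inr b => G.Adj a b
    | Sum.inr a, Sum.inl b => G.Adj a b
    | Sum.inr _, Sum.inr _ => False
  symm := ⟨by
    rintro (a | a) (b | b) h
    · exact G.symm.symm _ _ h
    · exact G.symm.symm _ _ h
    · exact G.symm.symm _ _ h
    · exact h⟩
  loopless := ⟨by
    rintro (a | a) h
    · exact G.loopless.irrefl a h
    · exact h⟩

open Finset in
/-- Any independent set in the splitting graph, under the Hall condition, has size ≤ n. -/
lemma indep_split_card_le {V : Type*} [Fintype V] (G : SimpleGraph V)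
    (hall : ∀ S : Finset V, IsIndepFinset G S → S.card ≤ (nbhdSet G S).card)
    (A : Finset (V ⊕ V)) (hA : IsIndepFinset (splittingGraph G) A) :
    A.card ≤ Fintype.card V := by
  classical
  set S := A.toLeft with hS
  set T := A.toRight with hT
  have hSind : IsIndepFinset G S := by
    intro u hu v hv hadj
    exact hA _ (Finset.mem_toLeft.1 hu) _ (Finset.mem_toLeft.1 hv) hadj
  have hST : Disjoint T (nbhdSet G S) := by
    rw [Finset.disjoint_left]
    intro b hb hbN
    obtain ⟨u, hu, hadj⟩ := (Finset.mem_filter.1 hbN).2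
    exact hA _ (Finset.mem_toLeft.1 hu) _ (Finset.mem_toRight.1 hb) hadj
  have h1 : S.card ≤ (nbhdSet G S).card := hall S hSind
  have h2 : T.card + (nbhdSet G S).card ≤ Fintype.card V := by
    rw [← Finset.card_union_of_disjoint hST]
    exact (Finset.card_le_card (Finset.subset_univ _)).trans_eq (Finset.card_univ)
  have h3 : S.card + T.card = A.card := Finset.card_toLeft_add_card_toRight
  omega

open Finset in
theorem stmt3 {V : Type*} [Fintype V] (G : SimpleGraph V)
    (hconn : G.Connected) (hn : 2 ≤ Fintype.card V) :
    (coverNum (splittingGraph G) = Fintype.card V ∧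
      indepNum (splittingGraph G) = Fintype.card V) ↔
    ∀ S : Finset V, IsIndepFinset G S → S.card ≤ (nbhdSet G S).card := by
  classical
  set n := Fintype.card V with hn'
  have hbdd : BddAbove {k : ℕ | ∃ S : Finset (V ⊕ V),
      IsIndepFinset (splittingGraph G) S ∧ S.card = k} := by
    refine ⟨Fintype.card (V ⊕ V), ?_⟩
    rintro k ⟨S, _, rfl⟩
    exact Finset.card_le_univ S
  constructor
  · rintro ⟨-, hind⟩ S hSind
    -- build the independent set inl '' S ∪ inr '' (univ \ N(S))
    set A : Finset (V ⊕ V) :=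
      S.map ⟨Sum.inl, Sum.inl_injective⟩ ∪
        (Finset.univ \ nbhdSet G S).map ⟨Sum.inr, Sum.inr_injective⟩ with hAdef
    have hAind : IsIndepFinset (splittingGraph G) A := by
      rintro u hu v hv hadj
      simp only [hAdef, Finset.mem_union, Finset.mem_map, Function.Embedding.coeFn_mk] at hu hv
      rcases hu with ⟨a, ha, rfl⟩ | ⟨a, ha, rfl⟩ <;>
        rcases hv with ⟨b, hb, rfl⟩ | ⟨b, hb, rfl⟩
      · exact hSind a ha b hb hadj
      · have : b ∈ nbhdSet G S := Finset.mem_filter.2 ⟨Finset.mem_univ _, a, ha, hadj⟩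
        exact (Finset.mem_sdiff.1 hb).2 this
      · have : a ∈ nbhdSet G S := Finset.mem_filter.2 ⟨Finset.mem_univ _, b, hb,
          hadj.symm⟩
        exact (Finset.mem_sdiff.1 ha).2 this
      · exact hadj
    have hdisj : Disjoint (S.map ⟨Sum.inl, Sum.inl_injective⟩)
        ((Finset.univ \ nbhdSet G S).map ⟨Sum.inr, Sum.inr_injective⟩) := by
      rw [Finset.disjoint_left]
      rintro x hx hy
      simp only [Finset.mem_map, Function.Embedding.coeFn_mk] at hx hy
      obtain ⟨a, -, rfl⟩ := hx
      obtain ⟨b, -, hb⟩ := hy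
      exact Sum.inl_ne_inr hb.symm
    have hcardA : A.card = S.card + (Finset.univ \ nbhdSet G S).card := by
      rw [hAdef, Finset.card_union_of_disjoint hdisj, Finset.card_map, Finset.card_map]
    have hNle : (nbhdSet G S).card ≤ n := Finset.card_le_univ _
    have hsd : (Finset.univ \ nbhdSet G S).card = n - (nbhdSet G S).card := by
      rw [Finset.card_sdiff_of_subset (Finset.subset_univ _), Finset.card_univ]
    have hmem : A.card ∈ {k : ℕ | ∃ S : Finset (V ⊕ V),
        IsIndepFinset (splittingGraph G) S ∧ S.card = k} := ⟨A, hAind, rfl⟩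
    have hle : A.card ≤ n := by
      have := le_csSup hbdd hmem
      rwa [← indepNum, hind] at this
    omega
  · intro hall
    have hindle : indepNum (splittingGraph G) ≤ n := by
      have hne : {k : ℕ | ∃ S : Finset (V ⊕ V),
          IsIndepFinset (splittingGraph G) S ∧ S.card = k}.Nonempty :=
        ⟨0, ∅, by intro u hu; simp at hu, Finset.card_empty⟩
      apply csSup_le hne
      rintro k ⟨A, hA, rfl⟩
      exact indep_split_card_le G hall A hA
    have hindge : n ≤ indepNum (splittingGraph G) := by
      refine le_csSup hbdd ⟨Finset.univ.map ⟨Sum.inr, Sum.inr_injective⟩, ?_, by simp [hn']⟩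
      rintro u hu v hv hadj
      simp only [Finset.mem_map, Function.Embedding.coeFn_mk] at hu hv
      obtain ⟨a, -, rfl⟩ := hu
      obtain ⟨b, -, rfl⟩ := hv
      exact hadj
    have hind : indepNum (splittingGraph G) = n := le_antisymm hindle hindge
    refine ⟨le_antisymm ?_ ?_, hind⟩
    · -- coverNum ≤ n : inl '' univ is a cover of size n
      apply Nat.sInf_le
      refine ⟨Finset.univ.map ⟨Sum.inl, Sum.inl_injective⟩, ?_, by simp [hn']⟩
      rintro (u | u) (v | v) hadj
      · left; simp
      · left; simp
      · right; simp
      · exact absurd hadj id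
    · -- coverNum ≥ n : complements of covers are independent
      have hne : {k : ℕ | ∃ C : Finset (V ⊕ V),
          IsVertexCover (splittingGraph G) C ∧ C.card = k}.Nonempty :=
        ⟨Fintype.card (V ⊕ V), Finset.univ, fun u v _ => Or.inl (Finset.mem_univ _),
          Finset.card_univ⟩
      apply le_csInf hne
      rintro k ⟨C, hC, rfl⟩
      have hAind : IsIndepFinset (splittingGraph G) (Finset.univ \ C) := by
        intro u hu v hv hadj
        rcases hC u v hadj with h | h
        · exact (Finset.mem_sdiff.1 hu).2 h
        · exact (Finset.mem_sdiff.1 hv).2 h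
      have h1 : (Finset.univ \ C).card ≤ n := indep_split_card_le G hall _ hAind
      have h2 : (Finset.univ \ C).card = Fintype.card (V ⊕ V) - C.card := by
        rw [Finset.card_sdiff_of_subset (Finset.subset_univ _), Finset.card_univ]
      have h3 : C.card ≤ Fintype.card (V ⊕ V) := Finset.card_le_univ _
      have h4 : Fintype.card (V ⊕ V) = n + n := by simp [hn']
      omega
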